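/- For c > 0, ν > 0, μ > 0, the Laplace transform of t ↦ t^(μ−1) E_{ν,μ}(−c^ν t^ν) equals p^(ν−μ)/(p^ν + c^ν) for p > c. -/

import Mathlib

open MeasureTheory Real Set

lemma ML_aux_integrable {a r : ℝ} (ha : 0 < a) (hr : 0 < r) :
    IntegrableOn (fun t : ℝ => t ^ (a - 1) * Real.exp (-(r * t))) (Ioi 0) := by
  have h1 := Real.GammaIntegral_convergent ha
  have h2 : IntegrableOn (fun x : ℝ => Real.exp (-(r * x)) * (r * x) ^ (a - 1)) (Ioi 0) := by
    have := (integrableOn_Ioi_comp_mul_left_iff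
      (fun x : ℝ => Real.exp (-x) * x ^ (a - 1)) 0 hr).mpr (by simpa using h1)
    simpa using this
  have h3 : IntegrableOn (fun x : ℝ => r ^ (1 - a) * (Real.exp (-(r * x)) * (r * x) ^ (a - 1))) (Ioi 0) := h2.const_mul _
  refine h3.congr_fun (fun t ht => ?_) measurableSet_Ioi
  have ht0 : (0:ℝ) < t := ht
  dsimp only
  rw [Real.mul_rpow hr.le ht0.le]
  have h4 : r ^ (1 - a) * r ^ (a - 1) = 1 := by
    rw [← Real.rpow_add hr]; norm_num
  linear_combination (Real.exp (-(r * t)) * t ^ (a - 1)) * h4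

theorem mittagLeffler_two_param_laplace_transform
    (c ν μ p : ℝ) (hc : 0 < c) (hν : 0 < ν) (hμ : 0 < μ) (hp : c < p) :
    ∫ t in Ioi (0 : ℝ),
        Real.exp (-p * t) *
          (t ^ (μ - 1) * ∑' k : ℕ, (-(c ^ ν * t ^ ν)) ^ k / Real.Gamma (μ + k * ν))
      = p ^ (ν - μ) / (p ^ ν + c ^ ν) := by
  have hp0 : 0 < p := hc.trans hp
  have hpν : (0:ℝ) < p ^ ν := Real.rpow_pos_of_pos hp0 ν
  have hcν : (0:ℝ) < c ^ ν := Real.rpow_pos_of_pos hc ν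
  set q : ℝ := c ^ ν / p ^ ν with hq
  have hq0 : 0 ≤ q := by positivity
  have hq1 : q < 1 := by
    rw [hq, div_lt_one hpν]
    exact Real.rpow_lt_rpow hc.le hp hν
  set F : ℕ → ℝ → ℝ := fun k t =>
    Real.exp (-p * t) * (t ^ (μ - 1) * ((-(c ^ ν * t ^ ν)) ^ k / Real.Gamma (μ + k * ν)))
    with hF
  set C : ℕ → ℝ := fun k => (-1 : ℝ) ^ k * (c ^ ν) ^ k / Real.Gamma (μ + k * ν) with hC
  have ha : ∀ k : ℕ, (0:ℝ) < μ + k * ν := fun k => by positivity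
  have hΓ : ∀ k : ℕ, (0:ℝ) < Real.Gamma (μ + k * ν) := fun k =>
    Real.Gamma_pos_of_pos (ha k)
  -- pointwise form of F on Ioi 0
  have hFeq : ∀ k : ℕ, ∀ t ∈ Ioi (0:ℝ),
      F k t = C k * (t ^ (μ + k * ν - 1) * Real.exp (-(p * t))) := by
    intro k t ht
    have ht0 : (0:ℝ) < t := ht
    have h1 : (-(c ^ ν * t ^ ν) : ℝ) ^ k = (-1 : ℝ) ^ k * (c ^ ν) ^ k * t ^ (ν * (k:ℝ)) := by
      rw [neg_pow, mul_pow, ← Real.rpow_natCast (t ^ ν) k, ← Real.rpow_mul ht0.le]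
      ring
    have h2 : t ^ (μ - 1) * t ^ (ν * (k:ℝ)) = t ^ (μ + (k:ℝ) * ν - 1) := by
      rw [← Real.rpow_add ht0]; ring_nf
    have h3 : Real.exp (-p * t) = Real.exp (-(p * t)) := by ring_nf
    rw [hF, hC]
    simp only []
    rw [h1, h3]
    field_simp
    rw [h2]; ring_nf
  -- integrability
  have hIntg : ∀ k : ℕ, IntegrableOn (F k) (Ioi 0) := by
    intro k
    have h3 : IntegrableOn
        (fun t : ℝ => C k * (t ^ (μ + k * ν - 1) * Real.exp (-(p * t)))) (Ioi 0) := by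
      have := (ML_aux_integrable (ha k) hp0).const_mul (C k)
      exact this
    exact h3.congr_fun (fun t ht => (hFeq k t ht).symm) measurableSet_Ioi
  -- value of each integral
  have hIntval : ∀ k : ℕ, ∫ t in Ioi (0:ℝ), F k t = (1 / p) ^ μ * (-q) ^ k := by
    intro k
    rw [setIntegral_congr_fun measurableSet_Ioi (fun t ht => hFeq k t ht),
      integral_const_mul, integral_rpow_mul_exp_neg_mul_Ioi (ha k) hp0]
    have hsplit : ((1:ℝ) / p) ^ (μ + k * ν) = (1 / p) ^ μ * ((1 / p) ^ ν) ^ k := by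
      rw [Real.rpow_add (by positivity), ← Real.rpow_natCast ((1/p) ^ ν) k,
        ← Real.rpow_mul (by positivity)]
      ring_nf
    have hqq : (-q : ℝ) ^ k = (-1:ℝ) ^ k * (c ^ ν) ^ k * ((1 / p) ^ ν) ^ k := by
      rw [neg_pow, ← mul_pow, ← mul_pow, ← mul_pow]
      congr 1
      rw [hq, one_div, Real.inv_rpow hp0.le]
      field_simp
    rw [hC, hsplit, hqq]
    field_simp
  -- norm integrals
  have hNormval : ∀ k : ℕ, (∫ t in Ioi (0:ℝ), ‖F k t‖) = (1 / p) ^ μ * q ^ k := by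
    intro k
    have habs : ∀ t ∈ Ioi (0:ℝ), ‖F k t‖ =
        ((c ^ ν) ^ k / Real.Gamma (μ + k * ν)) *
          (t ^ (μ + k * ν - 1) * Real.exp (-(p * t))) := by
      intro t ht
      have ht0 : (0:ℝ) < t := ht
      rw [Real.norm_eq_abs, hFeq k t ht, abs_mul, hC]
      have h5 : |(-1:ℝ) ^ k * (c ^ ν) ^ k / Real.Gamma (μ + k * ν)|
          = (c ^ ν) ^ k / Real.Gamma (μ + k * ν) := by
        rw [abs_div, abs_mul, abs_pow, abs_neg, abs_one, one_pow, one_mul,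
          abs_of_pos (hΓ k), abs_of_pos (pow_pos hcν k)]
      rw [h5, abs_of_pos (by positivity)]
    rw [setIntegral_congr_fun measurableSet_Ioi habs, integral_const_mul,
      integral_rpow_mul_exp_neg_mul_Ioi (ha k) hp0]
    have hsplit : ((1:ℝ) / p) ^ (μ + k * ν) = (1 / p) ^ μ * ((1 / p) ^ ν) ^ k := by
      rw [Real.rpow_add (by positivity), ← Real.rpow_natCast ((1/p) ^ ν) k,
        ← Real.rpow_mul (by positivity)]
      ring_nf
    have hqpow : q ^ k = (c ^ ν) ^ k * ((1 / p) ^ ν) ^ k := by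
      rw [← mul_pow]
      congr 1
      rw [hq, one_div, Real.inv_rpow hp0.le]
      field_simp
    rw [hsplit, hqpow]
    field_simp
  have hSum : Summable (fun k : ℕ => ∫ t in Ioi (0:ℝ), ‖F k t‖) :=
    (((summable_geometric_of_lt_one hq0 hq1).mul_left ((1/p) ^ μ))).congr
      (fun k => (hNormval k).symm)
  have hswap : (∫ t in Ioi (0:ℝ), ∑' k, F k t) = ∑' k, ∫ t in Ioi (0:ℝ), F k t :=
    (integral_tsum_of_summable_integral_norm hIntg hSum).symm
  have hLHS : ∀ t : ℝ, Real.exp (-p * t) *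
      (t ^ (μ - 1) * ∑' k : ℕ, (-(c ^ ν * t ^ ν)) ^ k / Real.Gamma (μ + k * ν))
      = ∑' k, F k t := by
    intro t
    rw [hF]
    simp only []
    rw [tsum_mul_left, tsum_mul_left]
  rw [setIntegral_congr_fun measurableSet_Ioi (fun t _ => hLHS t), hswap]
  have hfinal : ∑' k : ℕ, (∫ t in Ioi (0:ℝ), F k t) = (1/p) ^ μ * (1 - (-q))⁻¹ := by
    rw [tsum_congr hIntval, tsum_mul_left,
      tsum_geometric_of_norm_lt_one (by rwa [norm_neg, Real.norm_eq_abs, abs_of_nonneg hq0])]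
  rw [hfinal, sub_neg_eq_add, hq, Real.rpow_sub hp0, one_div, Real.inv_rpow hp0.le]
  have hden : (0:ℝ) < p ^ ν + c ^ ν := by positivity
  field_simp
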